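/- Let C and C′ be k-linear categories with right Serre k-functors (S,ψ) and (S′,ψ′) respectively, and let T : C ⥤ C′ be a k-linear fully faithful functor. Then there exists a unique family of morphisms κ_Y : T.obj (S.obj Y) ⟶ S′.obj (T.obj Y) (Y an object of C) such that ψ′_{T.obj Y, T.obj Y}(T.map f ≫ κ_Y)(𝟙_{T.obj Y}) = ψ_{Y,Y}(f)(𝟙_Y) for all f : Y ⟶ S.obj Y. Moreover this family is a natural transformation κ : S ⋙ T ⟶ T ⋙ S′, and it satisfies ψ′_{T.obj X, T.obj Y}(T.map f ≫ κ_Y)(T.map g) = ψ_{X,Y}(f)(g) for all objects X, Y and all f : X ⟶ S.obj Y, g : Y ⟶ X. -/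
import Mathlib


open CategoryTheory

universe w v u v' u'

/-- Serre functors and fully faithful k-linear functors: given right Serre k-functors
`(S, ψ)` on `C` and `(S', ψ')` on `C'` and a fully faithful k-linear functor `T : C ⥤ C'`,
there is a unique family `κ Y : T (S Y) ⟶ S' (T Y)` with
`ψ' (T.map f ≫ κ Y) (𝟙) = ψ f (𝟙)`; it is a natural transformation `S ⋙ T ⟶ T ⋙ S'`
and satisfies `ψ' (T.map f ≫ κ Y) (T.map g) = ψ f g`. -/
theorem rightSerre_linear_fully_faithful_comparison
    (k : Type w) [CommRing k]
    {C : Type u} [Category.{v} C] [Preadditive C] [CategoryTheory.Linear k C]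
    {C' : Type u'} [Category.{v'} C'] [Preadditive C'] [CategoryTheory.Linear k C']
    (S : C ⥤ C) [S.Additive] [S.Linear k] (S' : C' ⥤ C') [S'.Additive] [S'.Linear k]
    (ψ : ∀ X Y : C, (X ⟶ S.obj Y) ≃ₗ[k] Module.Dual k (Y ⟶ X))
    (ψ' : ∀ X Y : C', (X ⟶ S'.obj Y) ≃ₗ[k] Module.Dual k (Y ⟶ X))
    (hnat₁ : ∀ (X Z Y : C) (x : Z ⟶ X) (f : X ⟶ S.obj Y) (z : Y ⟶ Z),
        ψ Z Y (x ≫ f) z = ψ X Y f (z ≫ x))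
    (hnat₂ : ∀ (X Y Z : C) (y : Y ⟶ Z) (f : X ⟶ S.obj Y) (h : Z ⟶ X),
        ψ X Z (f ≫ S.map y) h = ψ X Y f (y ≫ h))
    (hnat₁' : ∀ (X Z Y : C') (x : Z ⟶ X) (f : X ⟶ S'.obj Y) (z : Y ⟶ Z),
        ψ' Z Y (x ≫ f) z = ψ' X Y f (z ≫ x))
    (hnat₂' : ∀ (X Y Z : C') (y : Y ⟶ Z) (f : X ⟶ S'.obj Y) (h : Z ⟶ X),
        ψ' X Z (f ≫ S'.map y) h = ψ' X Y f (y ≫ h))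
    (T : C ⥤ C') [T.Additive] [T.Linear k] [T.Full] [T.Faithful] :
    ∃ κ : ∀ Y : C, T.obj (S.obj Y) ⟶ S'.obj (T.obj Y),
      (∀ (Y : C) (f : Y ⟶ S.obj Y),
          ψ' (T.obj Y) (T.obj Y) (T.map f ≫ κ Y) (𝟙 (T.obj Y)) = ψ Y Y f (𝟙 Y)) ∧
      (∀ κ' : ∀ Y : C, T.obj (S.obj Y) ⟶ S'.obj (T.obj Y),
          (∀ (Y : C) (f : Y ⟶ S.obj Y),
            ψ' (T.obj Y) (T.obj Y) (T.map f ≫ κ' Y) (𝟙 (T.obj Y)) = ψ Y Y f (𝟙 Y)) →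
          κ' = κ) ∧
      (∀ (X Y : C) (u : X ⟶ Y),
          T.map (S.map u) ≫ κ Y = κ X ≫ S'.map (T.map u)) ∧
      (∀ (X Y : C) (f : X ⟶ S.obj Y) (g : Y ⟶ X),
          ψ' (T.obj X) (T.obj Y) (T.map f ≫ κ Y) (T.map g) = ψ X Y f g) := by
  -- `T.map` as a `k`-linear equivalence on hom-modules
  have hbij : ∀ X Y : C,
      Function.Bijective (Functor.mapLinearMap k T : (X ⟶ Y) →ₗ[k] (T.obj X ⟶ T.obj Y)) :=
    fun X Y => ⟨fun _ _ h => T.map_injective h, fun g => ⟨T.preimage g, T.map_preimage g⟩⟩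
  let e : ∀ X Y : C, (X ⟶ Y) ≃ₗ[k] (T.obj X ⟶ T.obj Y) := fun X Y =>
    LinearEquiv.ofBijective _ (hbij X Y)
  have he : ∀ (X Y : C) (f : X ⟶ Y), e X Y f = T.map f := fun _ _ _ => rfl
  have he' : ∀ (X Y : C) (g : T.obj X ⟶ T.obj Y), T.map ((e X Y).symm g) = g := by
    intro X Y g
    rw [← he, (e X Y).apply_symm_apply]
  let ℓ : ∀ Y : C, Module.Dual k (T.obj Y ⟶ T.obj (S.obj Y)) := fun Y =>
    (LinearMap.applyₗ (𝟙 Y)).comp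
      (((ψ Y Y).toLinearMap).comp (e Y (S.obj Y)).symm.toLinearMap)
  let κ : ∀ Y : C, T.obj (S.obj Y) ⟶ S'.obj (T.obj Y) := fun Y =>
    (ψ' (T.obj (S.obj Y)) (T.obj Y)).symm (ℓ Y)
  have hκ : ∀ (Y : C) (f : Y ⟶ S.obj Y),
      ψ' (T.obj (S.obj Y)) (T.obj Y) (κ Y) (T.map f) = ψ Y Y f (𝟙 Y) := by
    intro Y f
    have h1 : ψ' (T.obj (S.obj Y)) (T.obj Y) (κ Y) = ℓ Y :=
      (ψ' _ _).apply_symm_apply _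
    rw [h1]
    simp only [ℓ, LinearMap.comp_apply, LinearEquiv.coe_coe]
    rw [← he Y (S.obj Y) f, (e Y (S.obj Y)).symm_apply_apply]
    rfl
  -- the key general compatibility
  have hgen : ∀ (X Y : C) (f : X ⟶ S.obj Y) (g : Y ⟶ X),
      ψ' (T.obj X) (T.obj Y) (T.map f ≫ κ Y) (T.map g) = ψ X Y f g := by
    intro X Y f g
    rw [hnat₁' (T.obj (S.obj Y)) (T.obj X) (T.obj Y) (T.map f) (κ Y) (T.map g),
      ← T.map_comp, hκ Y (g ≫ f), hnat₁ X Y Y g f (𝟙 Y), Category.id_comp]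
  refine ⟨κ, ?_, ?_, ?_, hgen⟩
  · intro Y f
    have := hgen Y Y f (𝟙 Y)
    rwa [T.map_id] at this
  · -- uniqueness
    intro κ' hκ'
    funext Y
    apply (ψ' (T.obj (S.obj Y)) (T.obj Y)).injective
    apply LinearMap.ext
    intro z
    have hz : z = T.map ((e Y (S.obj Y)).symm z) := (he' Y (S.obj Y) z).symm
    set f := (e Y (S.obj Y)).symm z with hf
    rw [hz]
    have h1 : ψ' (T.obj (S.obj Y)) (T.obj Y) (κ' Y) (T.map f) = ψ Y Y f (𝟙 Y) := by
      have := hκ' Y f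
      rwa [hnat₁' (T.obj (S.obj Y)) (T.obj Y) (T.obj Y) (T.map f) (κ' Y) (𝟙 (T.obj Y)),
        Category.id_comp] at this
    rw [h1, hκ Y f]
  · -- naturality
    intro X Y u
    apply (ψ' (T.obj (S.obj X)) (T.obj Y)).injective
    apply LinearMap.ext
    intro z
    have hz : z = T.map ((e Y (S.obj X)).symm z) := (he' Y (S.obj X) z).symm
    set w := (e Y (S.obj X)).symm z with hw
    rw [hz]
    have lhs : ψ' (T.obj (S.obj X)) (T.obj Y) (T.map (S.map u) ≫ κ Y) (T.map w)
        = ψ (S.obj X) Y (S.map u) w := hgen (S.obj X) Y (S.map u) w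
    have rhs : ψ' (T.obj (S.obj X)) (T.obj Y) (κ X ≫ S'.map (T.map u)) (T.map w)
        = ψ X X (u ≫ w) (𝟙 X) := by
      rw [hnat₂' (T.obj (S.obj X)) (T.obj X) (T.obj Y) (T.map u) (κ X) (T.map w),
        ← T.map_comp, hκ X (u ≫ w)]
    rw [lhs, rhs]
    have h2 : ψ (S.obj X) Y (S.map u) w = ψ (S.obj X) X (𝟙 (S.obj X)) (u ≫ w) := by
      have := hnat₂ (S.obj X) X Y u (𝟙 (S.obj X)) w
      rwa [Category.id_comp] at this
    have h3 : ψ X X (u ≫ w) (𝟙 X) = ψ (S.obj X) X (𝟙 (S.obj X)) (u ≫ w) := by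
      have := hnat₁ (S.obj X) X X (u ≫ w) (𝟙 (S.obj X)) (𝟙 X)
      rwa [Category.comp_id, Category.id_comp] at this
    rw [h2, h3]
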